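/- Let X be a reflexive real Banach space and A : X → X* be a uniformly monotone operator, i.e. (A(u) − A(v), u − v) ≥ c‖u − v‖^p for some c > 0, p > 1, and all u, v ∈ X. If A is also coercive and hemicontinuous, then A is bijective and A^{-1} : X* → X is continuous. -/

import Mathlib

open Filter NormedSpace

namespace ZeidlerAux

open Filter Function Topology


noncomputable section

def dot {n : ℕ} (x y : Fin n → ℝ) : ℝ := ∑ i, x i * y i

lemma dot_sub_left {n} (x y z : Fin n → ℝ) : dot (x - y) z = dot x z - dot y z := by
  simp [dot, ← Finset.sum_sub_distrib, sub_mul]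

lemma dot_sub_right {n} (x y z : Fin n → ℝ) : dot x (y - z) = dot x y - dot x z := by
  simp [dot, ← Finset.sum_sub_distrib, mul_sub]

lemma dot_smul_right {n} (x z : Fin n → ℝ) (t : ℝ) : dot x (t • z) = t * dot x z := by
  simp only [dot, Pi.smul_apply, smul_eq_mul, Finset.mul_sum]
  exact Finset.sum_congr rfl fun i _ => by ring

lemma dot_self_nonneg {n} (x : Fin n → ℝ) : 0 ≤ dot x x :=
  Finset.sum_nonneg fun i _ => mul_self_nonneg _

lemma eq_of_dot_self_nonpos {n} (x : Fin n → ℝ) (h : dot x x ≤ 0) : x = 0 := by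
  have h0 : dot x x = 0 := le_antisymm h (dot_self_nonneg x)
  funext i
  have := (Finset.sum_eq_zero_iff_of_nonneg (fun i _ => mul_self_nonneg (x i))).mp h0 i
    (Finset.mem_univ i)
  simpa [mul_self_eq_zero] using this

lemma dot_single {n} (x : Fin n → ℝ) (i : Fin n) : dot x (Pi.single i (1:ℝ)) = x i := by
  rw [dot, Finset.sum_eq_single i]
  · simp
  · intro j _ hj; simp [Pi.single_apply, hj]
  · simp

lemma dot_le_sum_abs_mul_norm {n} (x y : Fin n → ℝ) : dot x y ≤ (∑ i, |x i|) * ‖y‖ := by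
  rw [Finset.sum_mul]
  refine Finset.sum_le_sum fun i _ => ?_
  calc x i * y i ≤ |x i * y i| := le_abs_self _
    _ = |x i| * |y i| := abs_mul _ _
    _ ≤ |x i| * ‖y‖ := by
        refine mul_le_mul_of_nonneg_left ?_ (abs_nonneg _)
        exact norm_le_pi_norm y i

lemma norm_le_sum_abs {n} (x : Fin n → ℝ) : ‖x‖ ≤ ∑ i, |x i| := by
  refine pi_norm_le_iff_of_nonneg (Finset.sum_nonneg fun i _ => abs_nonneg _) |>.mpr fun i => ?_
  simpa using Finset.single_le_sum (f := fun j => |x j|) (fun j _ => abs_nonneg _)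
    (Finset.mem_univ i)

/-- Local (ℓ¹-)boundedness of monotone maps on ℝⁿ. -/
lemma loc_bound {n} (B : (Fin n → ℝ) → Fin n → ℝ)
    (hm : ∀ x y, 0 ≤ dot (B x - B y) (x - y)) (x₀ : Fin n → ℝ) :
    ∃ M r : ℝ, 0 < r ∧ ∀ x, dist x x₀ ≤ r → (∑ j, |B x j|) ≤ M := by
  set r : ℝ := 1 / (n + 1) with hr
  have hrpos : 0 < r := by positivity
  set v : Fin n → ℝ → (Fin n → ℝ) := fun i s => x₀ + (2*s) • (Pi.single i 1 : Fin n → ℝ) with hv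
  set M₀ : ℝ := ∑ i, ((∑ j, |B (v i 1) j|) + (∑ j, |B (v i (-1)) j|)) with hM₀
  have habs0 : ∀ (i : Fin n) (s : ℝ), 0 ≤ ∑ j, |B (v i s) j| :=
    fun i s => Finset.sum_nonneg fun j _ => abs_nonneg _
  have hM₀nn : 0 ≤ M₀ :=
    Finset.sum_nonneg fun i _ => add_nonneg (habs0 i 1) (habs0 i (-1))
  have hVb : ∀ (i : Fin n) (s : ℝ), s = 1 ∨ s = -1 → (∑ j, |B (v i s) j|) ≤ M₀ := by
    intro i s hs
    have h1 : ((∑ j, |B (v i 1) j|) + (∑ j, |B (v i (-1)) j|)) ≤ M₀ :=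
      Finset.single_le_sum (f := fun i => ((∑ j, |B (v i 1) j|) + (∑ j, |B (v i (-1)) j|)))
        (fun i _ => add_nonneg (habs0 i 1) (habs0 i (-1))) (Finset.mem_univ i)
    rcases hs with h | h <;> subst h
    · linarith [habs0 i (-1)]
    · linarith [habs0 i 1]
  refine ⟨2 * n * M₀ + M₀, r, hrpos, fun x hx => ?_⟩
  set N : ℝ := ∑ j, |B x j| with hN
  have hNnn : 0 ≤ N := Finset.sum_nonneg fun j _ => abs_nonneg _
  have key : ∀ (i : Fin n) (s : ℝ), s = 1 ∨ s = -1 →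
      2 * (s * B x i) ≤ 2 * M₀ + (N + M₀) * r := by
    intro i s hs
    set D : Fin n → ℝ := B x - B (v i s) with hD
    have h0 : 0 ≤ dot D (x - v i s) := hm x (v i s)
    have hxv : x - v i s = (x - x₀) - (2*s) • (Pi.single i 1 : Fin n → ℝ) := by
      rw [hv]; abel_nf; rw [smul_add]
    have hdot : dot D (x - v i s) = dot D (x - x₀) - (2*s) * D i := by
      rw [hxv, dot_sub_right, dot_smul_right, dot_single]
    have hDsum : (∑ j, |D j|) ≤ N + M₀ := by
      have : ∀ j, |D j| ≤ |B x j| + |B (v i s) j| := by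
        intro j; rw [hD]; simpa using abs_sub (B x j) (B (v i s) j)
      calc (∑ j, |D j|) ≤ ∑ j, (|B x j| + |B (v i s) j|) :=
            Finset.sum_le_sum fun j _ => this j
        _ = N + ∑ j, |B (v i s) j| := by rw [Finset.sum_add_distrib]
        _ ≤ N + M₀ := by linarith [hVb i s hs]
    have h1 : (2*s) * D i ≤ (N + M₀) * r := by
      have h2 : dot D (x - x₀) ≤ (∑ j, |D j|) * ‖x - x₀‖ := dot_le_sum_abs_mul_norm _ _
      have h3 : ‖x - x₀‖ ≤ r := by rwa [← dist_eq_norm]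
      have hDnn : (0:ℝ) ≤ ∑ j, |D j| := Finset.sum_nonneg fun j _ => abs_nonneg (D j)
      have h4 : (∑ j, |D j|) * ‖x - x₀‖ ≤ (N + M₀) * r :=
        mul_le_mul hDsum h3 (norm_nonneg _) (by linarith)
      nlinarith [hdot, h0]
    have h5 : |B (v i s) i| ≤ M₀ := by
      refine le_trans ?_ (hVb i s hs)
      simpa using Finset.single_le_sum (f := fun j => |B (v i s) j|)
        (fun j _ => abs_nonneg _) (Finset.mem_univ i)
    have h6 : s * B (v i s) i ≤ M₀ := by
      rcases hs with h | h <;> subst h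
      · have := (abs_le.mp h5).2; linarith
      · have := (abs_le.mp h5).1; linarith
    have hDi : D i = B x i - B (v i s) i := by rw [hD]; simp
    have heq : s * B x i = s * D i + s * B (v i s) i := by rw [hDi]; ring
    nlinarith [h1, h6, heq]
  have habs : ∀ i : Fin n, 2 * |B x i| ≤ 2 * M₀ + (N + M₀) * r := by
    intro i
    rcases abs_cases (B x i) with ⟨h, _⟩ | ⟨h, _⟩
    · have := key i 1 (Or.inl rfl); rw [h]; linarith
    · have := key i (-1) (Or.inr rfl); rw [h]; linarith
  have hsum : 2 * N ≤ (n : ℝ) * (2 * M₀ + (N + M₀) * r) := by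
    have h := Finset.sum_le_sum (fun i (_ : i ∈ (Finset.univ : Finset (Fin n))) => habs i)
    rw [Finset.sum_const, Finset.card_univ, Fintype.card_fin, nsmul_eq_mul] at h
    calc 2 * N = ∑ i, 2 * |B x i| := by rw [hN, Finset.mul_sum]
      _ ≤ _ := h
  have hnr : (n : ℝ) * r ≤ 1 := by
    rw [hr, mul_one_div, div_le_one (by positivity)]
    linarith
  have hNM : (0:ℝ) ≤ N + M₀ := by linarith
  nlinarith [hsum, hnr, hNM]

lemma tendsto_dot {α} {l : Filter α} {n} {u w : α → Fin n → ℝ} {u₀ w₀ : Fin n → ℝ}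
    (hu : Tendsto u l (𝓝 u₀)) (hw : Tendsto w l (𝓝 w₀)) :
    Tendsto (fun a => dot (u a) (w a)) l (𝓝 (dot u₀ w₀)) := by
  unfold dot
  exact tendsto_finset_sum _ fun i _ =>
    (tendsto_pi_nhds.mp hu i).mul (tendsto_pi_nhds.mp hw i)

lemma minty_fd {n} (B : (Fin n → ℝ) → Fin n → ℝ)
    (hh : ∀ x z i, Continuous fun t : ℝ => B (x + t • z) i)
    (x β : Fin n → ℝ) (hβ : ∀ y, 0 ≤ dot (β - B y) (x - y)) : β = B x := by
  have key : ∀ z, dot (β - B x) z ≤ 0 := by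
    intro z
    set ψ : ℝ → ℝ := fun t => dot (β - B (x + t • z)) z with hψdef
    have hψ : Continuous ψ := by
      refine continuous_finset_sum _ fun i _ => ?_
      exact (continuous_const.sub (hh x z i)).mul continuous_const
    have hneg : ∀ t : ℝ, 0 < t → ψ t ≤ 0 := by
      intro t ht
      have h1 := hβ (x + t • z)
      have hxy : x - (x + t • z) = (-t) • z := by
        rw [sub_add_cancel_left, neg_smul]
      rw [hxy, dot_smul_right] at h1
      nlinarith
    have h0 : ψ 0 ≤ 0 := by
      have ht : Tendsto ψ (𝓝[>] (0:ℝ)) (𝓝 (ψ 0)) :=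
        (hψ.tendsto 0).mono_left nhdsWithin_le_nhds
      refine le_of_tendsto ht ?_
      filter_upwards [self_mem_nhdsWithin] with t htt using hneg t htt
    simpa [hψdef, zero_smul] using h0
  have h := key (β - B x)
  have := eq_of_dot_self_nonpos _ h
  exact sub_eq_zero.mp this

set_option maxHeartbeats 1000000 in
lemma fd_cont {n} (B : (Fin n → ℝ) → Fin n → ℝ)
    (hm : ∀ x y, 0 ≤ dot (B x - B y) (x - y))
    (hh : ∀ x z i, Continuous fun t : ℝ => B (x + t • z) i) : Continuous B := by
  rw [continuous_iff_seqContinuous]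
  intro x p hx
  obtain ⟨M, r, hrpos, hMb⟩ := loc_bound B hm p
  refine tendsto_of_subseq_tendsto fun ns hns => ?_
  have hy : Tendsto (fun k => x (ns k)) atTop (𝓝 p) := hx.comp hns
  obtain ⟨K, hK⟩ := Metric.tendsto_atTop.mp hy r hrpos
  set z : ℕ → Fin n → ℝ := fun k => x (ns (k + K)) with hzdef
  have hzball : ∀ k, B (z k) ∈ Metric.closedBall (0 : Fin n → ℝ) M := by
    intro k
    have hd : dist (z k) p ≤ r := le_of_lt (hK _ (Nat.le_add_left K k))
    rw [Metric.mem_closedBall, dist_zero_right]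
    exact le_trans (norm_le_sum_abs _) (hMb _ hd)
  obtain ⟨β, _, φ, hφmono, hφtend⟩ :=
    (isCompact_closedBall (0 : Fin n → ℝ) M).tendsto_subseq hzball
  have hφK : Tendsto (fun k => φ k + K) atTop atTop :=
    tendsto_atTop_mono (fun k => Nat.le_add_right (φ k) K) hφmono.tendsto_atTop
  have hz2 : Tendsto (fun k => z (φ k)) atTop (𝓝 p) := hy.comp hφK
  have hβp : β = B p := by
    refine minty_fd B hh p β fun y => ?_
    have htd : Tendsto (fun k => dot (B (z (φ k)) - B y) (z (φ k) - y)) atTop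
        (𝓝 (dot (β - B y) (p - y))) :=
      tendsto_dot (hφtend.sub tendsto_const_nhds) (hz2.sub tendsto_const_nhds)
    exact ge_of_tendsto' htd fun k => hm (z (φ k)) y
  exact ⟨fun k => φ k + K, by rw [← hβp]; exact hφtend⟩

lemma dot_zero_right {n} (x : Fin n → ℝ) : dot x 0 = 0 := by simp [dot]

lemma snoc_sub_snoc {n} (a b : Fin n → ℝ) (t s : ℝ) :
    (Fin.snoc a t : Fin (n+1) → ℝ) - Fin.snoc b s = Fin.snoc (a - b) (t - s) := by
  funext i
  refine Fin.lastCases ?_ ?_ i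
  · simp [Fin.snoc_last, Pi.sub_apply]
  · intro j; simp [Fin.snoc_castSucc, Pi.sub_apply]

lemma dot_snoc {n} (u : Fin (n+1) → ℝ) (b : Fin n → ℝ) (s : ℝ) :
    dot u (Fin.snoc b s) = dot (Fin.init u) b + u (Fin.last n) * s := by
  rw [dot, Fin.sum_univ_castSucc, dot]
  simp [Fin.snoc_castSucc, Fin.snoc_last, Fin.init]

lemma continuous_snoc {n} :
    Continuous (fun pr : (Fin n → ℝ) × ℝ => (Fin.snoc pr.1 pr.2 : Fin (n+1) → ℝ)) := by
  refine continuous_pi fun i => ?_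
  refine Fin.lastCases ?_ ?_ i
  · simp only [Fin.snoc_last]; exact continuous_snd
  · intro j
    simp only [Fin.snoc_castSucc]
    exact (continuous_apply j).comp continuous_fst

lemma fd_surj {κ q : ℝ} (hκ : 0 < κ) (hq : 1 < q) :
    ∀ (n : ℕ) (B : (Fin n → ℝ) → Fin n → ℝ), Continuous B →
    (∀ x y, κ * Real.sqrt (dot (x - y) (x - y)) ^ q ≤ dot (B x - B y) (x - y)) →
    Surjective B := by
  have hq1 : 0 < q - 1 := by linarith
  intro n
  induction n with
  | zero =>
    intro B _ _ f
    exact ⟨0, funext fun i => i.elim0⟩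
  | succ n IH =>
    intro B hBc hBm f
    set γ : ℝ := f (Fin.last n) with hγdef
    set g : (Fin n → ℝ) → ℝ → ℝ := fun x' t => B (Fin.snoc x' t) (Fin.last n) with hgdef
    -- increments of the scalar section
    have hg_incr : ∀ (x' : Fin n → ℝ) (s t : ℝ), s < t →
        g x' s + κ * (t - s) ^ (q - 1) ≤ g x' t := by
      intro x' s t hst
      have h := hBm (Fin.snoc x' t) (Fin.snoc x' s)
      rw [snoc_sub_snoc, sub_self] at h
      have hd : dot (B (Fin.snoc x' t) - B (Fin.snoc x' s))
          (Fin.snoc (0 : Fin n → ℝ) (t - s)) = (g x' t - g x' s) * (t - s) := by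
        rw [dot_snoc, dot_zero_right, zero_add, Pi.sub_apply]
      rw [hd] at h
      have hdd : dot (Fin.snoc (0 : Fin n → ℝ) (t - s)) (Fin.snoc (0 : Fin n → ℝ) (t - s))
          = (t - s) * (t - s) := by
        rw [dot_snoc, Fin.init_snoc, dot_zero_right, Fin.snoc_last]; ring
      rw [hdd] at h
      have hts : (0:ℝ) < t - s := sub_pos.mpr hst
      rw [Real.sqrt_mul_self (le_of_lt hts)] at h
      have hpow : (t - s) ^ q = (t - s) ^ (q - 1) * (t - s) := by
        nth_rewrite 1 [show q = (q - 1) + 1 by ring]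
        rw [Real.rpow_add hts, Real.rpow_one]
      rw [hpow] at h
      have h2 : (κ * (t - s) ^ (q - 1)) * (t - s) ≤ (g x' t - g x' s) * (t - s) := by
        calc (κ * (t - s) ^ (q - 1)) * (t - s) = κ * ((t - s) ^ (q - 1) * (t - s)) := by ring
          _ ≤ _ := h
      have := le_of_mul_le_mul_right h2 hts
      linarith
    have hgcont : ∀ x', Continuous (g x') := by
      intro x'
      exact (continuous_apply (Fin.last n)).comp
        (hBc.comp (continuous_snoc.comp (continuous_const.prodMk continuous_id)))
    -- existence of scalar root
    have hex : ∀ x', ∃ t, g x' t = γ := by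
      intro x'
      obtain ⟨T, hT0, hTb⟩ : ∃ T : ℝ, 0 < T ∧ |γ - g x' 0| ≤ κ * T ^ (q - 1) := by
        have h1 := (tendsto_rpow_atTop hq1).eventually_ge_atTop (|γ - g x' 0| / κ)
        obtain ⟨T, hT1, hT2⟩ := (h1.and (eventually_gt_atTop 0)).exists
        exact ⟨T, hT2, by rw [← div_le_iff₀' hκ]; exact hT1⟩
      have hup : γ ≤ g x' T := by
        have := hg_incr x' 0 T hT0
        have habs := abs_le.mp hTb
        simp only [sub_zero] at this
        linarith [habs.2]
      have hlo : g x' (-T) ≤ γ := by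
        have := hg_incr x' (-T) 0 (by linarith)
        have habs := abs_le.mp hTb
        simp only [zero_sub, sub_neg_eq_add, zero_add] at this
        linarith [habs.1]
      have hsub := intermediate_value_Icc (by linarith : -T ≤ T) (hgcont x').continuousOn
      obtain ⟨t, _, ht⟩ := hsub ⟨hlo, hup⟩
      exact ⟨t, ht⟩
    set τ : (Fin n → ℝ) → ℝ := fun x' => Classical.choose (hex x') with hτdef
    have hτ : ∀ x', g x' (τ x') = γ := fun x' => Classical.choose_spec (hex x')
    -- continuity of τ
    have hτc : Continuous τ := by
      rw [continuous_iff_continuousAt]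
      intro x₀'
      set E : (Fin n → ℝ) → ℝ := fun x' => γ - g x' (τ x₀') with hEdef
      have hEc : Continuous E := continuous_const.sub <|
        (continuous_apply (Fin.last n)).comp
          (hBc.comp (continuous_snoc.comp (continuous_id.prodMk continuous_const)))
      have hE0 : E x₀' = 0 := by rw [hEdef]; simp [hτ x₀']
      have bound : ∀ x', |τ x' - τ x₀'| ≤ (|E x'| / κ) ^ (1/(q-1)) := by
        intro x'
        rcases eq_or_ne (τ x') (τ x₀') with heq | hne
        · rw [heq, sub_self, abs_zero]
          positivity
        · have h := hBm (Fin.snoc x' (τ x')) (Fin.snoc x' (τ x₀'))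
          rw [snoc_sub_snoc, sub_self] at h
          set Δ : ℝ := τ x' - τ x₀' with hΔdef
          have hd1 : dot (B (Fin.snoc x' (τ x')) - B (Fin.snoc x' (τ x₀')))
              (Fin.snoc (0 : Fin n → ℝ) Δ) = E x' * Δ := by
            rw [dot_snoc, dot_zero_right, zero_add, Pi.sub_apply]
            have h1 : B (Fin.snoc x' (τ x')) (Fin.last n) = γ := hτ x'
            rw [h1]
          have hd2 : dot (Fin.snoc (0 : Fin n → ℝ) Δ) (Fin.snoc (0 : Fin n → ℝ) Δ)
              = Δ * Δ := by
            rw [dot_snoc, Fin.init_snoc, dot_zero_right, Fin.snoc_last]; ring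
          rw [hd1, hd2, Real.sqrt_mul_self_eq_abs] at h
          have hΔpos : 0 < |Δ| := abs_pos.mpr (sub_ne_zero.mpr hne)
          have hEb : E x' * Δ ≤ |E x'| * |Δ| := by
            calc E x' * Δ ≤ |E x' * Δ| := le_abs_self _
              _ = |E x'| * |Δ| := abs_mul _ _
          have hpow : |Δ| ^ q = |Δ| ^ (q - 1) * |Δ| := by
            nth_rewrite 1 [show q = (q - 1) + 1 by ring]
            rw [Real.rpow_add hΔpos, Real.rpow_one]
          have h3 : (κ * |Δ| ^ (q - 1)) * |Δ| ≤ |E x'| * |Δ| := by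
            calc (κ * |Δ| ^ (q - 1)) * |Δ| = κ * |Δ| ^ q := by rw [hpow]; ring
              _ ≤ E x' * Δ := h
              _ ≤ |E x'| * |Δ| := hEb
          have h4 : κ * |Δ| ^ (q - 1) ≤ |E x'| := le_of_mul_le_mul_right h3 hΔpos
          have h5 : |Δ| ^ (q - 1) ≤ |E x'| / κ := (le_div_iff₀' hκ).mpr h4
          calc |Δ| = (|Δ| ^ (q - 1)) ^ (1/(q-1)) := by
                rw [← Real.rpow_mul (abs_nonneg _), mul_one_div, div_self (ne_of_gt hq1),
                  Real.rpow_one]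
            _ ≤ (|E x'| / κ) ^ (1/(q-1)) :=
                Real.rpow_le_rpow (Real.rpow_nonneg (abs_nonneg _) _) h5 (by positivity)
      have hlim : Tendsto (fun x' => (|E x'| / κ) ^ (1/(q-1))) (𝓝 x₀') (𝓝 0) := by
        have hinner : Tendsto (fun x' => |E x'| / κ) (𝓝 x₀') (𝓝 0) := by
          have : Tendsto E (𝓝 x₀') (𝓝 0) := by
            rw [← hE0]; exact hEc.tendsto x₀'
          simpa using (this.abs.div_const κ)
        have houter : ContinuousAt (fun s : ℝ => s ^ (1/(q-1))) 0 :=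
          Real.continuousAt_rpow_const 0 _ (Or.inr (by positivity))
        have := houter.tendsto.comp hinner
        rwa [Real.zero_rpow (by positivity : (1/(q-1)) ≠ 0)] at this
      rw [ContinuousAt, tendsto_iff_dist_tendsto_zero]
      exact squeeze_zero (fun _ => dist_nonneg)
        (fun x' => by rw [Real.dist_eq]; exact bound x') hlim
    -- the reduced operator
    set C : (Fin n → ℝ) → (Fin n → ℝ) := fun x' => Fin.init (B (Fin.snoc x' (τ x'))) with hCdef
    have hCc : Continuous C := by
      refine continuous_pi fun j => ?_
      exact (continuous_apply _).comp (hBc.comp (continuous_snoc.comp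
        (continuous_id.prodMk hτc)))
    have hCm : ∀ x' y', κ * Real.sqrt (dot (x' - y') (x' - y')) ^ q
        ≤ dot (C x' - C y') (x' - y') := by
      intro x' y'
      set Δ : ℝ := τ x' - τ y' with hΔdef
      have h := hBm (Fin.snoc x' (τ x')) (Fin.snoc y' (τ y'))
      rw [snoc_sub_snoc] at h
      have hlastzero : (B (Fin.snoc x' (τ x')) - B (Fin.snoc y' (τ y'))) (Fin.last n) = 0 := by
        have h1 : g x' (τ x') = γ := hτ x'
        have h2 : g y' (τ y') = γ := hτ y'
        simp only [Pi.sub_apply]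
        rw [show B (Fin.snoc x' (τ x')) (Fin.last n) = g x' (τ x') from rfl,
          show B (Fin.snoc y' (τ y')) (Fin.last n) = g y' (τ y') from rfl, h1, h2, sub_self]
      have hd1 : dot (B (Fin.snoc x' (τ x')) - B (Fin.snoc y' (τ y')))
          (Fin.snoc (x' - y') Δ) = dot (C x' - C y') (x' - y') := by
        rw [dot_snoc, hlastzero, zero_mul, add_zero]
        congr 1
      have hd2 : dot (Fin.snoc (x' - y') Δ : Fin (n+1) → ℝ) (Fin.snoc (x' - y') Δ)
          = dot (x' - y') (x' - y') + Δ * Δ := by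
        rw [dot_snoc, Fin.init_snoc, Fin.snoc_last]
      rw [hd1, hd2] at h
      refine le_trans ?_ h
      have hmono : Real.sqrt (dot (x' - y') (x' - y'))
          ≤ Real.sqrt (dot (x' - y') (x' - y') + Δ * Δ) :=
        Real.sqrt_le_sqrt (by nlinarith [mul_self_nonneg Δ])
      have := Real.rpow_le_rpow (Real.sqrt_nonneg _) hmono (le_of_lt (by linarith : (0:ℝ) < q))
      exact mul_le_mul_of_nonneg_left this (le_of_lt hκ)
    obtain ⟨x', hx'⟩ := IH C hCc hCm (Fin.init f)
    refine ⟨Fin.snoc x' (τ x'), ?_⟩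
    funext i
    refine Fin.lastCases ?_ ?_ i
    · exact hτ x'
    · intro j
      have := congrFun hx' j
      rw [hCdef] at this
      exact this

section Banach

variable {X : Type*} [NormedAddCommGroup X] [NormedSpace ℝ X]
variable {A : X → (X →L[ℝ] ℝ)}

/-- Hemicontinuity on `[0,1]` upgrades to continuity on all of `ℝ` along segments. -/
lemma hemi_cont (hhemi : ∀ u v w : X, ContinuousOn (fun t : ℝ => A (u + t • v) w) (Set.Icc 0 1))
    (u v w : X) : Continuous fun t : ℝ => A (u + t • v) w := by
  rw [continuous_iff_continuousAt]
  intro t₀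
  have hc : ContinuousAt (fun s : ℝ => A ((u + (t₀ - 1) • v) + s • ((2:ℝ) • v)) w)
      ((t₀ - t₀ + 1)/2) :=
    (hhemi (u + (t₀ - 1) • v) ((2:ℝ) • v) w).continuousAt
      (Icc_mem_nhds (by ring_nf; norm_num) (by ring_nf; norm_num))
  have hσ : ContinuousAt (fun t : ℝ => (t - t₀ + 1)/2) t₀ := by fun_prop
  have h2 : ContinuousAt ((fun s : ℝ => A ((u + (t₀ - 1) • v) + s • ((2:ℝ) • v)) w) ∘
      (fun t : ℝ => (t - t₀ + 1)/2)) t₀ :=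
    ContinuousAt.comp hc hσ
  have hfun : ∀ t : ℝ, (u + (t₀ - 1) • v) + ((t - t₀ + 1)/2) • ((2:ℝ) • v) = u + t • v := by
    intro t
    rw [smul_smul, add_assoc, ← add_smul,
      show (t₀ - 1) + (t - t₀ + 1)/2 * 2 = t by ring]
  simp only [Function.comp_def, hfun] at h2
  exact h2

/-- Minty's trick. -/
lemma minty_banach (hhemi : ∀ u v w : X, ContinuousOn (fun t : ℝ => A (u + t • v) w) (Set.Icc 0 1))
    (u₀ : X) (f : X →L[ℝ] ℝ) (h : ∀ v, 0 ≤ (f - A v) (u₀ - v)) : A u₀ = f := by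
  have key : ∀ w, f w - A u₀ w ≤ 0 := by
    intro w
    set ψ : ℝ → ℝ := fun t => f w - A (u₀ + t • w) w with hψdef
    have hψ : Continuous ψ := continuous_const.sub (hemi_cont hhemi u₀ w w)
    have hneg : ∀ t : ℝ, 0 < t → ψ t ≤ 0 := by
      intro t ht
      have h1 := h (u₀ + t • w)
      rw [show u₀ - (u₀ + t • w) = (-t) • w by rw [sub_add_cancel_left, neg_smul],
        ContinuousLinearMap.map_smul] at h1
      simp only [ContinuousLinearMap.sub_apply, smul_eq_mul] at h1
      have : 0 ≤ (-t) * ψ t := by simpa [hψdef] using h1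
      nlinarith
    have h0 : ψ 0 ≤ 0 := by
      have ht : Tendsto ψ (𝓝[>] (0:ℝ)) (𝓝 (ψ 0)) :=
        (hψ.tendsto 0).mono_left nhdsWithin_le_nhds
      refine le_of_tendsto ht ?_
      filter_upwards [self_mem_nhdsWithin] with t htt using hneg t htt
    simpa [hψdef] using h0
  refine ContinuousLinearMap.ext fun w => ?_
  have h1 := key w
  have h2 := key (-w)
  simp only [map_neg] at h2
  linarith

set_option maxHeartbeats 2000000 in
set_option synthInstance.maxHeartbeats 400000 in
/-- Galerkin: solvability of the projected equation on the span of a finite set. -/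
lemma exists_galerkin {c p : ℝ} (hc : 0 < c) (hp : 1 < p)
    (hmono : ∀ u v : X, (A u - A v) (u - v) ≥ c * ‖u - v‖ ^ p)
    (hhemi : ∀ u v w : X, ContinuousOn (fun t : ℝ => A (u + t • v) w) (Set.Icc 0 1))
    (f : X →L[ℝ] ℝ) (s : Finset X) :
    ∃ u : X, u ∈ Submodule.span ℝ (s : Set X) ∧
      ∀ v ∈ Submodule.span ℝ (s : Set X), A u v = f v := by
  classical
  set F : Submodule ℝ X := Submodule.span ℝ (s : Set X) with hF
  haveI : FiniteDimensional ℝ F := FiniteDimensional.span_finset ℝ s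
  set n : ℕ := Module.finrank ℝ F with hn
  set b : Module.Basis (Fin n) ℝ F := Module.finBasis ℝ F with hb
  set ιL : (Fin n → ℝ) →ₗ[ℝ] X :=
    F.subtype.comp (b.equivFun.symm : (Fin n → ℝ) ≃ₗ[ℝ] F).toLinearMap with hιL
  have hmemF : ∀ z, ιL z ∈ F := fun z => (b.equivFun.symm z).2
  set T : F →L[ℝ] (Fin n → ℝ) :=
    LinearMap.toContinuousLinearMap (b.equivFun : F ≃ₗ[ℝ] (Fin n → ℝ)).toLinearMap with hT
  have hTz : ∀ z : Fin n → ℝ, ‖z‖ ≤ ‖T‖ * ‖ιL z‖ := by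
    intro z
    have h1 : T (b.equivFun.symm z) = z := by
      calc T (b.equivFun.symm z) = b.equivFun (b.equivFun.symm z) := rfl
        _ = z := b.equivFun.apply_symm_apply z
    have h2 : ‖(b.equivFun.symm z : F)‖ = ‖ιL z‖ := rfl
    calc ‖z‖ = ‖T (b.equivFun.symm z)‖ := by rw [h1]
      _ ≤ ‖T‖ * ‖(b.equivFun.symm z : F)‖ := T.le_opNorm _
      _ = ‖T‖ * ‖ιL z‖ := by rw [h2]
  have hdotz : ∀ z : Fin n → ℝ, Real.sqrt (dot z z) ≤ Real.sqrt (n+1) * ‖z‖ := by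
    intro z
    have h1 : dot z z ≤ (n+1) * (‖z‖ * ‖z‖) := by
      rw [dot]
      calc (∑ i, z i * z i) ≤ ∑ _i : Fin n, ‖z‖ * ‖z‖ := by
            refine Finset.sum_le_sum fun i _ => ?_
            have := norm_le_pi_norm z i
            have h0 : |z i| ≤ ‖z‖ := by rwa [← Real.norm_eq_abs]
            nlinarith [abs_nonneg (z i), neg_abs_le (z i), le_abs_self (z i), norm_nonneg z]
        _ = (n : ℝ) * (‖z‖ * ‖z‖) := by
            rw [Finset.sum_const, Finset.card_univ, Fintype.card_fin, nsmul_eq_mul]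
        _ ≤ (n+1) * (‖z‖ * ‖z‖) := by nlinarith [norm_nonneg z]
    calc Real.sqrt (dot z z) ≤ Real.sqrt ((n+1) * (‖z‖ * ‖z‖)) := Real.sqrt_le_sqrt h1
      _ = Real.sqrt (n+1) * ‖z‖ := by
          rw [Real.sqrt_mul (by positivity), Real.sqrt_mul_self (norm_nonneg z)]
  set m : ℝ := (Real.sqrt (n+1) * (‖T‖ + 1))⁻¹ with hm
  have hsq : (0:ℝ) < Real.sqrt (n+1) := Real.sqrt_pos.mpr (by positivity)
  have hTnn : (0:ℝ) ≤ ‖T‖ := ContinuousLinearMap.opNorm_nonneg T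
  have hmpos : 0 < m := by rw [hm]; positivity
  have hest : ∀ z : Fin n → ℝ, m * Real.sqrt (dot z z) ≤ ‖ιL z‖ := by
    intro z
    have h1 : Real.sqrt (dot z z) ≤ (Real.sqrt (n+1) * (‖T‖ + 1)) * ‖ιL z‖ := by
      calc Real.sqrt (dot z z) ≤ Real.sqrt (n+1) * ‖z‖ := hdotz z
        _ ≤ Real.sqrt (n+1) * (‖T‖ * ‖ιL z‖) :=
            mul_le_mul_of_nonneg_left (hTz z) (le_of_lt hsq)
        _ ≤ (Real.sqrt (n+1) * (‖T‖ + 1)) * ‖ιL z‖ := by nlinarith [norm_nonneg (ιL z)]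
    calc m * Real.sqrt (dot z z) ≤ m * ((Real.sqrt (n+1) * (‖T‖ + 1)) * ‖ιL z‖) :=
          mul_le_mul_of_nonneg_left h1 (le_of_lt hmpos)
      _ = ‖ιL z‖ := by
          rw [hm]; rw [inv_mul_cancel_left₀ (by positivity)]
  set B : (Fin n → ℝ) → (Fin n → ℝ) := fun x i => A (ιL x) ((b i : F) : X) - f ((b i : F) : X)
    with hB
  have hdotB : ∀ x y : Fin n → ℝ,
      dot (B x - B y) (x - y) = (A (ιL x) - A (ιL y)) (ιL x - ιL y) := by
    intro x y
    have h1 : ιL x - ιL y = ιL (x - y) := (map_sub ιL x y).symm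
    rw [h1]
    have h2 : ιL (x - y) = ∑ i, (x - y) i • ((b i : F) : X) := by
      rw [hιL]
      simp only [LinearMap.coe_comp, Function.comp_apply, LinearEquiv.coe_coe]
      rw [Module.Basis.equivFun_symm_apply]
      rw [map_sum]
      simp [Submodule.coe_smul]
    rw [h2, map_sum]
    rw [dot]
    refine Finset.sum_congr rfl fun i _ => ?_
    rw [map_smul]
    simp only [hB, Pi.sub_apply, ContinuousLinearMap.sub_apply, smul_eq_mul, Pi.sub_apply]
    ring
  set κ : ℝ := c * m ^ p with hκ
  have hκpos : 0 < κ := by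
    rw [hκ]; exact mul_pos hc (Real.rpow_pos_of_pos hmpos p)
  have hBm : ∀ x y : Fin n → ℝ,
      κ * Real.sqrt (dot (x - y) (x - y)) ^ p ≤ dot (B x - B y) (x - y) := by
    intro x y
    rw [hdotB]
    have h1 := hmono (ιL x) (ιL y)
    refine le_trans ?_ h1
    have h2 : m * Real.sqrt (dot (x - y) (x - y)) ≤ ‖ιL x - ιL y‖ := by
      rw [← map_sub ιL]; exact hest (x - y)
    have h3 : (m * Real.sqrt (dot (x - y) (x - y))) ^ p ≤ ‖ιL x - ιL y‖ ^ p :=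
      Real.rpow_le_rpow (by positivity) h2 (by linarith)
    rw [Real.mul_rpow (le_of_lt hmpos) (Real.sqrt_nonneg _)] at h3
    calc κ * Real.sqrt (dot (x - y) (x - y)) ^ p
        = c * (m ^ p * Real.sqrt (dot (x - y) (x - y)) ^ p) := by rw [hκ]; ring
      _ ≤ c * ‖ιL x - ιL y‖ ^ p := mul_le_mul_of_nonneg_left h3 (le_of_lt hc)
  have hBh : ∀ x z i, Continuous fun t : ℝ => B (x + t • z) i := by
    intro x z i
    have h1 : ∀ t : ℝ, ιL (x + t • z) = ιL x + t • ιL z := by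
      intro t; rw [map_add, map_smul]
    simp only [hB, h1]
    exact (hemi_cont hhemi (ιL x) (ιL z) _).sub continuous_const
  have hBmono : ∀ x y : Fin n → ℝ, 0 ≤ dot (B x - B y) (x - y) := by
    intro x y
    refine le_trans ?_ (hBm x y)
    positivity
  have hBc : Continuous B := fd_cont B hBmono hBh
  obtain ⟨x₀, hx₀⟩ := fd_surj hκpos hp n B hBc hBm 0
  refine ⟨ιL x₀, hmemF x₀, ?_⟩
  have hbase : ∀ i, A (ιL x₀) ((b i : F) : X) = f ((b i : F) : X) := by
    intro i
    have := congrFun hx₀ i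
    simp only [hB, Pi.zero_apply] at this
    linarith [this]
  intro v hv
  have hv2 : v = ∑ i, b.repr ⟨v, hv⟩ i • ((b i : F) : X) := by
    have h1 : ((⟨v, hv⟩ : F) : X) = ((∑ i, b.repr ⟨v, hv⟩ i • b i : F) : X) :=
      congrArg _ (b.sum_repr ⟨v, hv⟩).symm
    simp only [Submodule.coe_sum, Submodule.coe_smul] at h1; exact h1
  rw [hv2, map_sum, map_sum]
  refine Finset.sum_congr rfl fun i _ => ?_
  rw [ContinuousLinearMap.map_smul, ContinuousLinearMap.map_smul, hbase i]

end Banach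

end

end ZeidlerAux

open Topology Filter NormedSpace


set_option maxHeartbeats 1000000 in
/-- Zeidler's Theorem 26.A (consequence): in a reflexive real Banach space X, a uniformly
    monotone ((A u - A v)(u - v) ≥ c‖u-v‖^p), coercive and hemicontinuous operator
    A : X → X* is bijective with continuous inverse. Reflexivity is expressed as
    surjectivity of the canonical embedding into the double dual. -/
theorem monotone_operator_bijective_continuous_inverse
    {X : Type*} [NormedAddCommGroup X] [NormedSpace ℝ X] [CompleteSpace X]
    (hrefl : Function.Surjective (inclusionInDoubleDual ℝ X))
    (A : X → (X →L[ℝ] ℝ)) (c p : ℝ) (hc : 0 < c) (hp : 1 < p)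
    (hmono : ∀ u v : X, (A u - A v) (u - v) ≥ c * ‖u - v‖ ^ p)
    (hcoer : Tendsto (fun u : X => A u u / ‖u‖) (Filter.comap norm Filter.atTop) Filter.atTop)
    (hhemi : ∀ u v w : X, ContinuousOn (fun t : ℝ => A (u + t • v) w) (Set.Icc 0 1)) :
    Function.Bijective A ∧ Continuous (Function.invFun A) := by
  classical
  -- Injectivity
  have hinj : Function.Injective A := by
    intro u v huv
    by_contra hne
    have h1 := hmono u v
    rw [huv, sub_self] at h1
    simp only [ContinuousLinearMap.zero_apply] at h1
    have hpos : 0 < ‖u - v‖ := norm_pos_iff.mpr (sub_ne_zero.mpr hne)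
    have := Real.rpow_pos_of_pos hpos p
    nlinarith
  -- Surjectivity
  have hsurj : Function.Surjective A := by
    intro f
    have hev : ∀ᶠ u : X in Filter.comap norm Filter.atTop, ‖f‖ < A u u / ‖u‖ :=
      hcoer.eventually_gt_atTop ‖f‖
    rw [Filter.eventually_comap] at hev
    obtain ⟨R, hR⟩ := Filter.eventually_atTop.mp hev
    set R₀ : ℝ := max R 1 with hR₀def
    have hb : ∀ u : X, A u u = f u → ‖u‖ ≤ R₀ := by
      intro u hu
      by_contra hgt
      push_neg at hgt
      have hnorm : R ≤ ‖u‖ := le_trans (le_max_left _ _) (le_of_lt hgt)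
      have h1 : ‖f‖ < A u u / ‖u‖ := hR ‖u‖ hnorm u rfl
      have hupos : 0 < ‖u‖ :=
        lt_of_lt_of_le (lt_of_lt_of_le one_pos (le_max_right R 1)) (le_of_lt hgt)
      have h2 : f u ≤ ‖f‖ * ‖u‖ := by
        calc f u ≤ |f u| := le_abs_self _
          _ = ‖f u‖ := (Real.norm_eq_abs _).symm
          _ ≤ ‖f‖ * ‖u‖ := f.le_opNorm u
      rw [hu] at h1
      have h3 := (lt_div_iff₀ hupos).mp h1
      linarith
    choose us hus1 hus2 using ZeidlerAux.exists_galerkin hc hp hmono hhemi f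
    have hbnd : ∀ s : Finset X, ‖us s‖ ≤ R₀ := fun s => hb _ (hus2 s _ (hus1 s))
    set 𝒰 : Ultrafilter (Finset X) := Ultrafilter.of Filter.atTop with h𝒰
    have hle : (𝒰 : Filter (Finset X)) ≤ Filter.atTop := Ultrafilter.of_le _
    set J := inclusionInDoubleDual ℝ X with hJ
    set Φ : Finset X → WeakDual ℝ (StrongDual ℝ X) :=
      fun s => StrongDual.toWeakDual (J (us s)) with hΦ
    have hK : IsCompact ((WeakDual.toStrongDual (𝕜 := ℝ) (E := StrongDual ℝ X)) ⁻¹'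
        Metric.closedBall 0 R₀) := WeakDual.isCompact_closedBall 0 R₀
    have hmem : ∀ s, Φ s ∈ (WeakDual.toStrongDual (𝕜 := ℝ) (E := StrongDual ℝ X)) ⁻¹'
        Metric.closedBall 0 R₀ := by
      intro s
      simp only [Set.mem_preimage, Metric.mem_closedBall, dist_zero_right]
      refine (le_of_eq (dist_zero_right
        (WeakDual.toStrongDual (Φ s) : StrongDual ℝ (StrongDual ℝ X)))).trans ?_
      calc ‖WeakDual.toStrongDual (Φ s)‖ = ‖J (us s)‖ := rfl
        _ ≤ ‖us s‖ := double_dual_bound _ _ _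
        _ ≤ R₀ := hbnd s
    have hKle : (𝒰.map Φ : Filter (WeakDual ℝ (StrongDual ℝ X))) ≤ Filter.principal
        ((WeakDual.toStrongDual (𝕜 := ℝ) (E := StrongDual ℝ X)) ⁻¹' Metric.closedBall 0 R₀) :=
      Filter.le_principal_iff.mpr (Filter.mem_map.mpr (Filter.Eventually.of_forall hmem))
    obtain ⟨ξ, _, hξ⟩ := hK.ultrafilter_le_nhds (𝒰.map Φ) hKle
    have htend : Filter.Tendsto Φ 𝒰 (𝓝 ξ) := hξ
    obtain ⟨u₀, hu₀⟩ := hrefl (WeakDual.toStrongDual ξ)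
    have heval : ∀ φ : X →L[ℝ] ℝ, Filter.Tendsto (fun s => φ (us s)) 𝒰 (𝓝 (φ u₀)) := by
      intro φ
      have h1 := (tendsto_iff_forall_eval_tendsto_topDualPairing.mp htend) φ
      have h2 : ∀ s, topDualPairing ℝ (StrongDual ℝ X) (Φ s) φ = φ (us s) := fun s => rfl
      have h3 : topDualPairing ℝ (StrongDual ℝ X) ξ φ = φ u₀ := by
        have h4 : (J u₀) φ = (WeakDual.toStrongDual ξ) φ := by rw [hu₀]
        have h5 : (J u₀) φ = φ u₀ := rfl
        rw [← h5, h4]; rfl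
      rw [← h3]
      exact h1.congr fun s => (h2 s)
    have hkey : ∀ v : X, 0 ≤ (f - A v) (u₀ - v) := by
      intro v
      have hv : ∀ᶠ s : Finset X in Filter.atTop, {v} ≤ s := Filter.eventually_ge_atTop {v}
      have hev2 : ∀ᶠ s : Finset X in 𝒰, 0 ≤ f (us s) - f v - (A v) (us s) + A v v := by
        filter_upwards [hle hv] with s hs
        have hvmem : v ∈ Submodule.span ℝ ((s : Finset X) : Set X) :=
          Submodule.subset_span (Finset.singleton_subset_iff.mp hs)
        have h1 : A (us s) v = f v := hus2 s v hvmem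
        have h2 : A (us s) (us s) = f (us s) := hus2 s (us s) (hus1 s)
        have h3 := hmono (us s) v
        have h4 : (0:ℝ) ≤ c * ‖us s - v‖ ^ p := by positivity
        have h5 : (0:ℝ) ≤ (A (us s) - A v) (us s - v) := le_trans h4 h3
        simp only [ContinuousLinearMap.sub_apply, map_sub] at h5
        linarith
      have hlim : Filter.Tendsto (fun s => f (us s) - f v - (A v) (us s) + A v v) 𝒰
          (𝓝 (f u₀ - f v - A v u₀ + A v v)) :=
        (((heval f).sub_const (f v)).sub (heval (A v))).add_const (A v v)
      have h6 : (0:ℝ) ≤ f u₀ - f v - A v u₀ + A v v := ge_of_tendsto hlim hev2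
      simp only [ContinuousLinearMap.sub_apply, map_sub]
      linarith
    exact ⟨u₀, ZeidlerAux.minty_banach hhemi u₀ f hkey⟩
  have hbij : Function.Bijective A := ⟨hinj, hsurj⟩
  refine ⟨hbij, ?_⟩
  -- Continuity of the inverse
  have hAinv : ∀ g : X →L[ℝ] ℝ, A (Function.invFun A g) = g := fun g =>
    Function.rightInverse_invFun hsurj g
  rw [Metric.continuous_iff]
  intro g ε hε
  refine ⟨c * ε ^ (p - 1), by positivity, fun g' hg' => ?_⟩
  set u := Function.invFun A g' with hu
  set v := Function.invFun A g with hv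
  rcases eq_or_ne u v with heq | hne
  · rw [dist_eq_norm, heq, sub_self, norm_zero]; exact hε
  · have hd : 0 < ‖u - v‖ := norm_pos_iff.mpr (sub_ne_zero.mpr hne)
    have h1 := hmono u v
    rw [hAinv g', hAinv g] at h1
    have h2 : (g' - g) (u - v) ≤ ‖g' - g‖ * ‖u - v‖ := by
      calc (g' - g) (u - v) ≤ |(g' - g) (u - v)| := le_abs_self _
        _ = ‖(g' - g) (u - v)‖ := (Real.norm_eq_abs _).symm
        _ ≤ ‖g' - g‖ * ‖u - v‖ := (g' - g).le_opNorm _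
    have h3 : c * ‖u - v‖ ^ p ≤ ‖g' - g‖ * ‖u - v‖ := le_trans h1 h2
    have hpow : ‖u - v‖ ^ p = ‖u - v‖ ^ (p - 1) * ‖u - v‖ := by
      nth_rewrite 1 [show p = (p - 1) + 1 by ring]
      rw [Real.rpow_add hd, Real.rpow_one]
    rw [hpow] at h3
    have h4 : c * ‖u - v‖ ^ (p - 1) ≤ ‖g' - g‖ := by
      have h5 : (c * ‖u - v‖ ^ (p - 1)) * ‖u - v‖ ≤ ‖g' - g‖ * ‖u - v‖ := by
        calc (c * ‖u - v‖ ^ (p - 1)) * ‖u - v‖ = c * (‖u - v‖ ^ (p - 1) * ‖u - v‖) := by ring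
          _ ≤ ‖g' - g‖ * ‖u - v‖ := h3
      exact le_of_mul_le_mul_right h5 hd
    have h6 : ‖g' - g‖ < c * ε ^ (p - 1) := by rwa [← dist_eq_norm]
    rw [dist_eq_norm]
    by_contra hcon
    push_neg at hcon
    have h7 : ε ^ (p - 1) ≤ ‖u - v‖ ^ (p - 1) :=
      Real.rpow_le_rpow (le_of_lt hε) hcon (by linarith)
    nlinarith
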